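/- Let k be a field, V and W finite-dimensional k-vector spaces, and f : V →ₗ[k] W, g : W →ₗ[k] V linear maps. Then there exist submodules V_I, V_N of V and W_I, W_N of W such that: IsCompl V_I V_N and IsCompl W_I W_N; f maps V_I into W_I and V_N into W_N; g maps W_I into V_I and W_N into V_N; the restriction of g ∘ f to V_I is a bijection of V_I and the restriction of f ∘ g to W_I is a bijection of W_I; and the restrictions of g ∘ f to V_N and of f ∘ g to W_N are nilpotent endomorphisms. -/
import Mathlib

open LinearMap Filter

private lemma fitting_aux {k V : Type*} [Field k] [AddCommGroup V] [Module k V]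
    (e : V →ₗ[k] V) (N : ℕ)
    (hc : IsCompl (LinearMap.ker (e ^ (N + 1))) (LinearMap.range (e ^ (N + 1))))
    (hr : LinearMap.range (e ^ (N + 2)) = LinearMap.range (e ^ (N + 1))) :
    ∃ (h1 : ∀ v ∈ LinearMap.range (e ^ (N + 1)), e v ∈ LinearMap.range (e ^ (N + 1)))
      (h3 : ∀ v ∈ LinearMap.ker (e ^ (N + 1)), e v ∈ LinearMap.ker (e ^ (N + 1))),
      Function.Bijective (e.restrict h1) ∧ IsNilpotent (e.restrict h3) := by
  have h1 : ∀ v ∈ LinearMap.range (e ^ (N + 1)), e v ∈ LinearMap.range (e ^ (N + 1)) := by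
    rintro v ⟨u, rfl⟩
    exact ⟨e u, by simp [← Module.End.mul_apply, ← pow_succ, ← pow_succ']⟩
  have h3 : ∀ v ∈ LinearMap.ker (e ^ (N + 1)), e v ∈ LinearMap.ker (e ^ (N + 1)) := by
    intro v hv
    simp only [LinearMap.mem_ker] at hv ⊢
    rw [← Module.End.mul_apply, ← pow_succ, pow_succ', Module.End.mul_apply, hv, map_zero]
  refine ⟨h1, h3, ⟨?_, ?_⟩, ?_⟩
  · -- injective
    intro x y hxy
    have hval : e (x : V) = e (y : V) := congrArg Subtype.val hxy
    have hker : (x : V) - (y : V) ∈ LinearMap.ker (e ^ (N + 1)) := by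
      simp only [LinearMap.mem_ker, pow_succ, Module.End.mul_apply, map_sub, hval]
      simp
    have hrange : (x : V) - (y : V) ∈ LinearMap.range (e ^ (N + 1)) :=
      sub_mem x.2 y.2
    have := hc.disjoint.le_bot ⟨hker, hrange⟩
    exact Subtype.ext (sub_eq_zero.mp this)
  · -- surjective
    rintro ⟨y, hy⟩
    rw [← hr] at hy
    obtain ⟨u, hu⟩ := hy
    refine ⟨⟨(e ^ (N + 1)) u, LinearMap.mem_range_self _ u⟩, Subtype.ext ?_⟩
    simp only [LinearMap.restrict_apply]
    rw [← hu, ← Module.End.mul_apply, ← pow_succ']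
  · -- nilpotent
    refine ⟨N + 1, ?_⟩
    rw [Module.End.pow_restrict]
    ext x
    simp only [LinearMap.restrict_apply, LinearMap.zero_apply, ZeroMemClass.coe_zero]
    exact x.2

theorem fitting_decomposition_pair
    (k V W : Type*) [Field k] [AddCommGroup V] [Module k V] [FiniteDimensional k V]
    [AddCommGroup W] [Module k W] [FiniteDimensional k W]
    (f : V →ₗ[k] W) (g : W →ₗ[k] V) :
    ∃ (VI VN : Submodule k V) (WI WN : Submodule k W),
      IsCompl VI VN ∧ IsCompl WI WN ∧
      (∀ v ∈ VI, f v ∈ WI) ∧ (∀ v ∈ VN, f v ∈ WN) ∧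
      (∀ w ∈ WI, g w ∈ VI) ∧ (∀ w ∈ WN, g w ∈ VN) ∧
      ∃ (h1 : ∀ v ∈ VI, (g ∘ₗ f) v ∈ VI) (h2 : ∀ w ∈ WI, (f ∘ₗ g) w ∈ WI)
        (h3 : ∀ v ∈ VN, (g ∘ₗ f) v ∈ VN) (h4 : ∀ w ∈ WN, (f ∘ₗ g) w ∈ WN),
        Function.Bijective ((g ∘ₗ f).restrict h1) ∧
        Function.Bijective ((f ∘ₗ g).restrict h2) ∧
        IsNilpotent ((g ∘ₗ f).restrict h3) ∧
        IsNilpotent ((f ∘ₗ g).restrict h4) := by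
  set e : V →ₗ[k] V := g ∘ₗ f with he
  set e' : W →ₗ[k] W := f ∘ₗ g with he'
  -- key commutation identities
  have comm : ∀ (n : ℕ) (v : V), f ((e ^ n) v) = (e' ^ n) (f v) := by
    intro n
    induction n with
    | zero => simp
    | succ n ih =>
      intro v
      rw [pow_succ, Module.End.mul_apply, pow_succ, Module.End.mul_apply, ih (e v)]
      simp [he, he']
  have comm' : ∀ (n : ℕ) (w : W), g ((e' ^ n) w) = (e ^ n) (g w) := by
    intro n
    induction n with
    | zero => simp
    | succ n ih =>
      intro w
      rw [pow_succ, Module.End.mul_apply, pow_succ, Module.End.mul_apply, ih (e' w)]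
      simp [he, he']
  obtain ⟨n, hn⟩ := eventually_atTop.mp <|
    (e.eventually_isCompl_ker_pow_range_pow.and e.eventually_iInf_range_pow_eq).and
      (e'.eventually_isCompl_ker_pow_range_pow.and e'.eventually_iInf_range_pow_eq)
  obtain ⟨⟨hcV, hrV⟩, hcW, hrW⟩ := hn (n + 1) (by omega)
  obtain ⟨⟨_, hrV'⟩, _, hrW'⟩ := hn (n + 2) (by omega)
  have hrVe : LinearMap.range (e ^ (n + 2)) = LinearMap.range (e ^ (n + 1)) := by
    rw [← hrV, ← hrV']
  have hrWe : LinearMap.range (e' ^ (n + 2)) = LinearMap.range (e' ^ (n + 1)) := by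
    rw [← hrW, ← hrW']
  obtain ⟨h1, h3, hbV, hnV⟩ := fitting_aux e n hcV hrVe
  obtain ⟨h2, h4, hbW, hnW⟩ := fitting_aux e' n hcW hrWe
  refine ⟨LinearMap.range (e ^ (n + 1)), LinearMap.ker (e ^ (n + 1)),
    LinearMap.range (e' ^ (n + 1)), LinearMap.ker (e' ^ (n + 1)),
    hcV.symm, hcW.symm, ?_, ?_, ?_, ?_, h1, h2, h3, h4, hbV, hbW, hnV, hnW⟩
  · rintro v ⟨u, rfl⟩
    exact ⟨f u, (comm (n + 1) u).symm⟩
  · intro v hv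
    simp only [LinearMap.mem_ker] at hv ⊢
    rw [← comm, hv, map_zero]
  · rintro w ⟨u, rfl⟩
    exact ⟨g u, (comm' (n + 1) u).symm⟩
  · intro w hw
    simp only [LinearMap.mem_ker] at hw ⊢
    rw [← comm', hw, map_zero]
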